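/- Let (C^•, ∂) be a finite-dimensional acyclic cochain complex of odd length n = 2r+1 over ℂ, equipped with a chirality operator Γ (Γ² = id, Γ(C^k) = C^{n−k}) such that the map Γ∘∂ restricts to an isomorphism C^k_+ → C^{n−k−1}_+ for all 0 ≤ k ≤ r−1, where C^k_+ = C^k ∩ ker(∂∘Γ). Assume additionally that dim C^k_+ = dim ker(∂|_{C^{n-k}}) for each k (which holds when the signature operator B = Γ∂ + ∂Γ is invertible, since then Γ maps C^k_+ isomorphically onto C^{n−k}_− = C^{n−k} ∩ ker(Γ∂) = ker(∂)∩C^{n−k}). Then for every 0 ≤ k ≤ r−1, dim C^k_+ + dim C^{k+1}_+ = dim C^{k+1}. -/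
import Mathlib


set_option maxHeartbeats 1000000
set_option synthInstance.maxHeartbeats 400000

/-!
STATEMENT 14.  `V = ⊕ C^k` is a finite-dimensional acyclic cochain complex
over `ℂ` of odd length `n = 2r+1`, realized as an internally graded vector
space with a homogeneous degree `+1` differential `d` (acyclicity:
`ker d = range d`), equipped with a chirality operator `Γ` (`Γ² = id`,
`Γ(C^k) = C^{n-k}`).  `C^k_+ = C^k ∩ ker(d∘Γ)`.  Hypotheses: `Γ∘d` restricts
to an isomorphism `C^k_+ → C^{n-k-1}_+` for `0 ≤ k ≤ r-1`, and
`dim C^k_+ = dim ker(d|_{C^{n-k}})` for `0 ≤ k ≤ r` (consequences of the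
invertibility of the signature operator `B = Γd + dΓ`).  Conclusion:
`dim C^k_+ + dim C^{k+1}_+ = dim C^{k+1}` for `0 ≤ k ≤ r-1`. -/
theorem stmt14 (V : Type*) [AddCommGroup V] [Module ℂ V] [FiniteDimensional ℂ V]
    (r : ℕ) (n : ℤ) (hn : n = 2 * (r : ℤ) + 1)
    (C : ℤ → Submodule ℂ V) (hinternal : DirectSum.IsInternal C)
    (hbound : ∀ k : ℤ, (k < 0 ∨ n < k) → C k = ⊥)
    (d : V →ₗ[ℂ] V)
    (hdgrade : ∀ k : ℤ, ∀ x ∈ C k, d x ∈ C (k + 1))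
    (hdd : d ∘ₗ d = 0)
    (hacyclic : LinearMap.ker d = LinearMap.range d)
    (Γ : V →ₗ[ℂ] V) (hΓ2 : Γ ∘ₗ Γ = LinearMap.id)
    (hΓgrade : ∀ k : ℤ, Submodule.map Γ (C k) = C (n - k))
    (Cp : ℤ → Submodule ℂ V)
    (hCp : ∀ k : ℤ, Cp k = C k ⊓ LinearMap.ker (d ∘ₗ Γ))
    (hiso : ∀ k : ℤ, 0 ≤ k → k ≤ (r : ℤ) - 1 →
      Submodule.map (Γ ∘ₗ d) (Cp k) = Cp (n - k - 1) ∧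
        ∀ x ∈ Cp k, (Γ ∘ₗ d) x = 0 → x = 0)
    (hdim : ∀ k : ℤ, 0 ≤ k → k ≤ (r : ℤ) →
      Module.finrank ℂ ↥(Cp k) =
        Module.finrank ℂ ↥(C (n - k) ⊓ LinearMap.ker d)) :
    ∀ k : ℤ, 0 ≤ k → k ≤ (r : ℤ) - 1 →
      Module.finrank ℂ ↥(Cp k) + Module.finrank ℂ ↥(Cp (k + 1)) =
        Module.finrank ℂ ↥(C (k + 1)) := by
  classical
  set E := LinearEquiv.ofBijective (DirectSum.coeLinearMap C) hinternal with hE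
  -- key lemma: C m ⊓ ker d = d (C (m-1))
  have key : ∀ m : ℤ, C m ⊓ LinearMap.ker d = Submodule.map d (C (m - 1)) := by
    intro m
    apply le_antisymm
    · rintro x ⟨hxm, hxk⟩
      have hxr : x ∈ LinearMap.range d := hacyclic ▸ hxk
      obtain ⟨y, hy⟩ := hxr
      set Y := E.symm y with hY
      have hy2 : y = ∑ i ∈ Y.support, ((Y i : V)) := by
        have h0 : E Y = y := E.apply_symm_apply y
        calc y = E Y := h0.symm
        _ = E (∑ i ∈ Y.support, DirectSum.of (fun i => ↥(C i)) i (Y i)) := by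
            rw [DirectSum.sum_support_of]
        _ = ∑ i ∈ Y.support, E (DirectSum.of (fun i => ↥(C i)) i (Y i)) :=
            map_sum E.toLinearMap _ _
        _ = ∑ i ∈ Y.support, ((Y i : V)) := by
            refine Finset.sum_congr rfl fun i _ => ?_
            exact DirectSum.coeLinearMap_of C i (Y i)
      -- projection onto degree m
      set π : V →ₗ[ℂ] V :=
        (C m).subtype ∘ₗ (DirectSum.component ℂ ℤ (fun i => ↥(C i)) m) ∘ₗ
          (E.symm.toLinearMap) with hπ
      have hπmem : ∀ (j : ℤ) (w : V), w ∈ C j → π w = if j = m then w else 0 := by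
        intro j w hw
        simp only [hπ, LinearMap.coe_comp, Function.comp_apply, LinearEquiv.coe_coe]
        rw [← DirectSum.apply_eq_component]
        by_cases h : j = m
        · subst h
          rw [if_pos rfl, hinternal.ofBijective_coeLinearMap_of_mem hw]
          rfl
        · rw [if_neg h, hinternal.ofBijective_coeLinearMap_of_mem_ne h hw]
          rfl
      have hx1 : π x = x := by rw [hπmem m x hxm, if_pos rfl]
      have hx2 : π x = ∑ i ∈ Y.support, (if i + 1 = m then d (Y i) else 0) := by
        rw [← hy, hy2, map_sum, map_sum]
        refine Finset.sum_congr rfl fun i _ => ?_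
        exact hπmem (i + 1) (d (Y i)) (hdgrade i _ (Y i).2)
      have hx3 : x = if m - 1 ∈ Y.support then d (Y (m - 1)) else 0 := by
        have hsum : (∑ i ∈ Y.support, (if i + 1 = m then d (Y i) else 0))
            = ∑ i ∈ Y.support, (if i = m - 1 then d ((Y i : V)) else 0) :=
          Finset.sum_congr rfl fun i _ => by
            simp only [show (i + 1 = m) ↔ (i = m - 1) from by omega]
        rw [← hx1, hx2, hsum, Finset.sum_ite_eq']
      by_cases hmem : m - 1 ∈ Y.support
      · rw [hx3, if_pos hmem]
        exact ⟨Y (m - 1), (Y (m - 1)).2, rfl⟩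
      · rw [hx3, if_neg hmem]
        exact ⟨0, (C (m - 1)).zero_mem, map_zero d⟩
    · rintro x ⟨y, hy, rfl⟩
      constructor
      · have h := hdgrade (m - 1) y hy
        rwa [show m - 1 + 1 = m from by ring] at h
      · have h := LinearMap.congr_fun hdd y
        simpa using h
  -- rank-nullity for d restricted to C j
  have hrank : ∀ j : ℤ, Module.finrank ℂ ↥(Submodule.map d (C j)) +
      Module.finrank ℂ ↥(C j ⊓ LinearMap.ker d) = Module.finrank ℂ ↥(C j) := by
    intro j
    have h1 := LinearMap.finrank_range_add_finrank_ker (d.domRestrict (C j))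
    rw [LinearMap.range_domRestrict] at h1
    have h2 : Module.finrank ℂ ↥(LinearMap.ker (d.domRestrict (C j))) =
        Module.finrank ℂ ↥(C j ⊓ LinearMap.ker d) := by
      rw [LinearMap.ker_domRestrict]
      have hle : C j ⊓ LinearMap.ker d ≤ C j := inf_le_left
      have heq : Submodule.comap (C j).subtype (LinearMap.ker d) =
          Submodule.comap (C j).subtype (C j ⊓ LinearMap.ker d) := by
        ext ⟨v, hv⟩
        simp [hv]
      rw [heq]
      exact (Submodule.comapSubtypeEquivOfLe hle).finrank_eq
    rw [h2] at h1
    exact h1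
  -- Γ gives dim C j = dim C (n - j)
  have hΓinj : Function.Injective Γ := by
    have h : Function.LeftInverse Γ Γ := fun v => LinearMap.congr_fun hΓ2 v
    exact h.injective
  have hΓdim : ∀ j : ℤ, Module.finrank ℂ ↥(C j) = Module.finrank ℂ ↥(C (n - j)) := by
    intro j
    rw [← hΓgrade j]
    exact (Submodule.equivMapOfInjective Γ hΓinj (C j)).finrank_eq
  intro k hk0 hk1
  have e1 := hdim k hk0 (by omega)
  have e2 := hdim (k + 1) (by omega) (by omega)
  rw [show n - (k + 1) = n - k - 1 from by ring] at e2
  have e3 := key (n - k)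
  have e4 := hrank (n - k - 1)
  have e5 := hΓdim (k + 1)
  rw [show n - (k + 1) = n - k - 1 from by ring] at e5
  rw [e1, e2, e3, e5]
  omega
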